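/- arXiv:2201.06756 — 2 statements merged into one kernel-verified Lean document; each statement's English description precedes it below -/
import Mathlib

section
/- Every weakly polymatroidal monomial ideal has linear quotients. -/
open MvPolynomial

namespace Paper

abbrev R (K : Type) [Field K] (n : ℕ) := MvPolynomial (Fin n) K

noncomputable def mon (K : Type) [Field K] {n : ℕ} (a : Fin n →₀ ℕ) : R K n :=
  monomial a 1

def mdeg {n : ℕ} (a : Fin n →₀ ℕ) : ℕ := a.sum fun _ e => e

def IsSqfree {n : ℕ} (a : Fin n →₀ ℕ) : Prop := ∀ i, a i ≤ 1

variable {K : Type} [Field K] {n : ℕ}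

/-- A monomial ideal: an ideal generated by a set of monomials. -/
def IsMonomialIdeal (I : Ideal (R K n)) : Prop :=
  ∃ S : Set (Fin n →₀ ℕ), I = Ideal.span ((mon K) '' S)

/-- The (exponent vectors of the) minimal monomial generators `G(I)` of a monomial
ideal: monomials in `I` such that no proper divisor lies in `I`. -/
def minGens (I : Ideal (R K n)) : Set (Fin n →₀ ℕ) :=
  { a | mon K a ∈ I ∧ ∀ (b : Fin n →₀ ℕ) (i : Fin n),
      a = b + Finsupp.single i 1 → mon K b ∉ I }

/-- Polymatroidal: a monomial ideal generated in a single degree satisfying the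
exchange property. -/
def IsPolymatroidal (I : Ideal (R K n)) : Prop :=
  IsMonomialIdeal I ∧
  (∃ d, ∀ a ∈ minGens I, mdeg a = d) ∧
  ∀ u ∈ minGens I, ∀ v ∈ minGens I, ∀ i : Fin n, v i < u i →
    ∃ j : Fin n, u j < v j ∧
      ∃ w ∈ minGens I, w + Finsupp.single i 1 = u + Finsupp.single j 1

/-- Matroidal: squarefree polymatroidal. -/
def IsMatroidal (I : Ideal (R K n)) : Prop :=
  IsPolymatroidal I ∧ ∀ a ∈ minGens I, IsSqfree a

/-- Weakly polymatroidal with respect to the variable ordering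
`x_{σ 0} > x_{σ 1} > ... > x_{σ (n-1)}`. -/
def IsWeaklyPolymatroidalWrt (σ : Equiv.Perm (Fin n)) (I : Ideal (R K n)) : Prop :=
  IsMonomialIdeal I ∧
  ∀ u ∈ minGens I, ∀ v ∈ minGens I, ∀ t : Fin n,
    (∀ s, s < t → u (σ s) = v (σ s)) → v (σ t) < u (σ t) →
    ∃ j : Fin n, t < j ∧
      ∃ w : Fin n →₀ ℕ,
        w + Finsupp.single (σ j) 1 = v + Finsupp.single (σ t) 1 ∧ mon K w ∈ I

/-- Weakly polymatroidal with respect to the standard ordering `x_1 > ... > x_n`. -/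
def IsWeaklyPolymatroidal (I : Ideal (R K n)) : Prop :=
  IsWeaklyPolymatroidalWrt (Equiv.refl (Fin n)) I

/-- Vertex splittable monomial ideals (Moradi–Khosh-Ahang). Ideals of
`K[V \ {x}]` are encoded as ideals of `R` whose minimal generators do not
involve the variable `x`. -/
inductive VertexSplittable : Ideal (R K n) → Prop
  | principal (a : Fin n →₀ ℕ) : VertexSplittable (Ideal.span {mon K a})
  | bot : VertexSplittable ⊥
  | top : VertexSplittable ⊤
  | split (x : Fin n) (I₁ I₂ : Ideal (R K n)) :
      VertexSplittable I₁ → VertexSplittable I₂ →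
      (∀ a ∈ minGens I₁, a x = 0) → (∀ a ∈ minGens I₂, a x = 0) →
      I₂ ≤ I₁ →
      minGens (Ideal.span {(X x : R K n)} * I₁ + I₂)
        = minGens (Ideal.span {(X x : R K n)} * I₁) ∪ minGens I₂ →
      minGens (Ideal.span {(X x : R K n)} * I₁) ∩ minGens I₂ = ∅ →
      VertexSplittable (Ideal.span {(X x : R K n)} * I₁ + I₂)

/-- Linear quotients: some ordering of the minimal monomial generators such that
each successive colon ideal is generated by a subset of the variables. -/
def HasLinearQuotients (I : Ideal (R K n)) : Prop :=
  IsMonomialIdeal I ∧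
  ∃ L : List (Fin n →₀ ℕ), L.Nodup ∧ {a | a ∈ L} = minGens I ∧
    ∀ (j : ℕ) (hj : j < L.length), 0 < j →
      ∃ S : Set (Fin n),
        Submodule.colon (Ideal.span ((mon K) '' {a | a ∈ L.take j}))
            (Ideal.span {mon K (L.get ⟨j, hj⟩)})
          = Ideal.span ((fun i => (X i : R K n)) '' S)


/-- A (possibly void) abstract simplicial complex on the vertex set `Fin n`. -/
structure SComplex (n : ℕ) where
  faces : Finset (Finset (Fin n))
  down : ∀ F ∈ faces, ∀ G ⊆ F, G ∈ faces

variable {n : ℕ}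

def SComplex.IsFacet (Δ : SComplex n) (F : Finset (Fin n)) : Prop :=
  F ∈ Δ.faces ∧ ∀ G ∈ Δ.faces, F ⊆ G → G = F

/-- Deletion of a vertex. -/
def SComplex.del (Δ : SComplex n) (x : Fin n) : SComplex n where
  faces := Δ.faces.filter (fun F => x ∉ F)
  down := by
    intro F hF G hG
    simp only [Finset.mem_filter] at *
    exact ⟨Δ.down F hF.1 G hG, fun hx => hF.2 (hG hx)⟩

/-- Link of a vertex. -/
def SComplex.lk (Δ : SComplex n) (x : Fin n) : SComplex n where
  faces := Δ.faces.filter (fun F => x ∉ F ∧ insert x F ∈ Δ.faces)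
  down := by
    intro F hF G hG
    simp only [Finset.mem_filter] at *
    refine ⟨Δ.down F hF.1 G hG, fun hx => hF.2.1 (hG hx), ?_⟩
    exact Δ.down _ hF.2.2 _ (Finset.insert_subset_insert x hG)

/-- Vertex decomposability, defined recursively via shedding vertices. -/
inductive VertexDecomposable : SComplex n → Prop
  | simplex (Δ : SComplex n) (F : Finset (Fin n)) :
      Δ.faces = F.powerset → VertexDecomposable Δ
  | shed (Δ : SComplex n) (x : Fin n) :
      VertexDecomposable (Δ.del x) → VertexDecomposable (Δ.lk x) →
      (∀ F ∈ (Δ.lk x).faces, ¬ (Δ.del x).IsFacet F) →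
      VertexDecomposable Δ

/-- Shellability (non-pure, Björner–Wachs). -/
def SComplex.Shellable (Δ : SComplex n) : Prop :=
  ∃ L : List (Finset (Fin n)), L.Nodup ∧ {F | F ∈ L} = {F | Δ.IsFacet F} ∧
    ∀ (i j : ℕ) (hi : i < L.length) (hj : j < L.length), i < j →
      ∃ x ∈ L.get ⟨j, hj⟩ \ L.get ⟨i, hi⟩,
        ∃ (l : ℕ) (hl : l < j),
          L.get ⟨j, hj⟩ \ L.get ⟨l, Nat.lt_trans hl hj⟩ = {x}

/-- The Alexander dual complex `Δ^∨ = { V \ A : A ∉ Δ }`. -/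
noncomputable def SComplex.dual (Δ : SComplex n) : SComplex n where
  faces := Finset.univ.filter (fun B => Bᶜ ∉ Δ.faces)
  down := by
    classical
    intro F hF G hG
    simp only [Finset.mem_filter, Finset.mem_univ, true_and] at *
    intro hGc
    exact hF (Δ.down _ hGc _ (Finset.compl_subset_compl.2 hG))


/-- The squarefree exponent vector of a set of vertices. -/
noncomputable def sqmon {n : ℕ} (F : Finset (Fin n)) : Fin n →₀ ℕ :=
  ∑ i ∈ F, Finsupp.single i 1

/-- The Stanley–Reisner ideal of `Δ`. -/
noncomputable def srIdeal (K : Type) [Field K] {n : ℕ} (Δ : SComplex n) :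
    Ideal (MvPolynomial (Fin n) K) :=
  Ideal.span ((fun F => mon K (sqmon F)) '' {F | F ∉ Δ.faces})


section CM
variable (A : Type) [CommRing A]

/-- Krull dimension of a module: the dimension of `A / ann M`. -/
noncomputable def moduleDim (M : Type) [AddCommGroup M] [Module A M] : WithBot ℕ∞ :=
  ringKrullDim (A ⧸ Submodule.annihilator (⊤ : Submodule A M))

/-- `rs` is an `M`-regular sequence: each entry is a nonzerodivisor on the quotient
of `M` by the previous entries. -/
def IsRegSeq (M : Type) [AddCommGroup M] [Module A M] (rs : List A) : Prop :=
  ∀ (i : ℕ) (hi : i < rs.length),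
    ∀ m : M ⧸ (Ideal.span {r | r ∈ rs.take i} • (⊤ : Submodule A M)),
      rs.get ⟨i, hi⟩ • m = 0 → m = 0

/-- Depth of `M` with respect to the ideal `J`: the supremum of lengths of
`M`-regular sequences contained in `J`. -/
noncomputable def moduleDepth (J : Ideal A) (M : Type) [AddCommGroup M] [Module A M] : ℕ :=
  sSup {k | ∃ rs : List A, rs.length = k ∧ (∀ r ∈ rs, r ∈ J) ∧ IsRegSeq A M rs}

/-- Cohen–Macaulay module (with respect to the ideal `J` playing the role of the
maximal ideal): zero, or depth equals Krull dimension. -/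
def IsCMmod (J : Ideal A) (M : Type) [AddCommGroup M] [Module A M] : Prop :=
  Subsingleton M ∨ moduleDim A M = ((moduleDepth A J M : ℕ∞) : WithBot ℕ∞)

/-- Sequentially Cohen–Macaulay module: a filtration `0 = M₀ ⊂ ... ⊂ M_r = N` with
Cohen–Macaulay quotients of strictly increasing Krull dimension. -/
def IsSeqCM (J : Ideal A) (N : Type) [AddCommGroup N] [Module A N] : Prop :=
  ∃ (r : ℕ) (c : Fin (r + 1) → Submodule A N),
    c 0 = ⊥ ∧ c (Fin.last r) = ⊤ ∧
    (∀ i : Fin r, c i.castSucc ≤ c i.succ) ∧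
    (∀ i : Fin r,
      IsCMmod A J (↥(c i.succ) ⧸ (Submodule.comap (c i.succ).subtype (c i.castSucc)))) ∧
    (∀ i j : Fin r, i < j →
      moduleDim A (↥(c i.succ) ⧸ (Submodule.comap (c i.succ).subtype (c i.castSucc)))
        < moduleDim A (↥(c j.succ) ⧸ (Submodule.comap (c j.succ).subtype (c j.castSucc))))

end CM

variable {K : Type} [Field K] {n : ℕ}

/-- The irrelevant maximal ideal `(x_1, ..., x_n)`. -/
noncomputable def maxIdeal (K : Type) [Field K] (n : ℕ) : Ideal (MvPolynomial (Fin n) K) :=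
  Ideal.span (Set.range (X : Fin n → MvPolynomial (Fin n) K))

section Res

/-- The differential of a free complex given by a matrix of polynomials. -/
noncomputable def resDiff (β : ℕ → ℕ)
    (Mt : (i : ℕ) → Fin (β (i + 1)) → Fin (β i) → MvPolynomial (Fin n) K) (i : ℕ) :
    (Fin (β (i + 1)) →₀ MvPolynomial (Fin n) K) →ₗ[MvPolynomial (Fin n) K]
      (Fin (β i) →₀ MvPolynomial (Fin n) K) :=
  Finsupp.lsum (MvPolynomial (Fin n) K) fun j =>
    LinearMap.toSpanSingleton (MvPolynomial (Fin n) K) _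
      (∑ k : Fin (β i), Finsupp.single k (Mt i j k))

/-- The augmentation map sending basis elements to the generators `g`. -/
noncomputable def resAug (β₀ : ℕ) (g : Fin β₀ → MvPolynomial (Fin n) K) :
    (Fin β₀ →₀ MvPolynomial (Fin n) K) →ₗ[MvPolynomial (Fin n) K] MvPolynomial (Fin n) K :=
  Finsupp.lsum (MvPolynomial (Fin n) K) fun j =>
    LinearMap.toSpanSingleton (MvPolynomial (Fin n) K) _ (g j)

/-- A graded free resolution of the ideal `I`, recorded by Betti numbers `β`,
degree shifts `dg`, homogeneous generators `g` of `I`, and matrices `Mt` of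
homogeneous entries, which is exact. -/
structure GradedRes (I : Ideal (MvPolynomial (Fin n) K)) where
  β : ℕ → ℕ
  dg : (i : ℕ) → Fin (β i) → ℕ
  g : Fin (β 0) → MvPolynomial (Fin n) K
  hg : ∀ j, (g j).IsHomogeneous (dg 0 j)
  Mt : (i : ℕ) → Fin (β (i + 1)) → Fin (β i) → MvPolynomial (Fin n) K
  hMt : ∀ i j k, Mt i j k = 0 ∨
    (dg i k ≤ dg (i + 1) j ∧ (Mt i j k).IsHomogeneous (dg (i + 1) j - dg i k))
  hrange : LinearMap.range (resAug (β 0) g) = I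
  hexact0 : LinearMap.ker (resAug (β 0) g) = LinearMap.range (resDiff β Mt 0)
  hexact : ∀ i, LinearMap.ker (resDiff β Mt i) = LinearMap.range (resDiff β Mt (i + 1))

/-- Castelnuovo–Mumford regularity, as the infimum over all graded free
resolutions of the maximum of `(shift) - (homological degree)`. -/
noncomputable def reg (I : Ideal (MvPolynomial (Fin n) K)) : ℕ∞ :=
  sInf { r : ℕ∞ | ∃ Res : GradedRes I,
    ∀ (i : ℕ) (j : Fin (Res.β i)), (Res.dg i j : ℕ∞) ≤ r + i }

/-- `I` has a `d`-linear resolution. -/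
def HasLinearRes (I : Ideal (MvPolynomial (Fin n) K)) (d : ℕ) : Prop :=
  ∃ Res : GradedRes I, ∀ (i : ℕ) (j : Fin (Res.β i)), Res.dg i j = d + i

/-- The ideal generated by the degree-`d` elements of `I`. -/
noncomputable def compIdeal (I : Ideal (MvPolynomial (Fin n) K)) (d : ℕ) : Ideal (MvPolynomial (Fin n) K) :=
  Ideal.span { f | f ∈ I ∧ f.IsHomogeneous d }

/-- Componentwise linear ideal. -/
def ComponentwiseLinear (I : Ideal (MvPolynomial (Fin n) K)) : Prop :=
  ∀ d, compIdeal I d = ⊥ ∨ HasLinearRes (compIdeal I d) d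

end Res

section Aux

variable {K : Type} [Field K] {n : ℕ}

lemma mon_mul (a b : Fin n →₀ ℕ) : mon K a * mon K b = mon K (a + b) := by
  simp [mon, monomial_mul]

lemma mon_mem_of_le {I : Ideal (R K n)} {s a : Fin n →₀ ℕ} (hs : mon K s ∈ I) (h : s ≤ a) :
    mon K a ∈ I := by
  have : mon K (a - s) * mon K s = mon K a := by
    rw [mon_mul, tsub_add_cancel_of_le h]
  rw [← this]
  exact Ideal.mul_mem_left _ _ hs

lemma mem_span_mon_support {S : Set (Fin n →₀ ℕ)} {f : R K n}
    (hf : f ∈ Ideal.span ((mon K) '' S)) : ∀ b ∈ f.support, ∃ s ∈ S, s ≤ b := by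
  classical
  refine Submodule.span_induction ?_ ?_ ?_ ?_ hf
  · rintro x ⟨s, hs, rfl⟩ b hb
    rw [mon, MvPolynomial.support_monomial] at hb
    simp only [one_ne_zero, if_false, Finset.mem_singleton] at hb
    exact ⟨s, hs, hb ▸ le_refl s⟩
  · intro b hb
    simp at hb
  · intro x y _ _ hx hy b hb
    rcases Finset.mem_union.1 (MvPolynomial.support_add hb) with h | h
    · exact hx _ h
    · exact hy _ h
  · intro a x _ hx b hb
    rw [smul_eq_mul] at hb
    obtain ⟨c, _, d, hd, rfl⟩ := Finset.mem_add.1 (MvPolynomial.support_mul _ _ hb)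
    obtain ⟨s, hsS, hsd⟩ := hx d hd
    exact ⟨s, hsS, hsd.trans le_add_self⟩

lemma sum_single_one (i : Fin n) : (∑ s : Fin n, (Finsupp.single i (1:ℕ)) s) = 1 := by
  classical
  simp only [Finsupp.single_apply]
  rw [Finset.sum_ite_eq]
  simp

lemma exists_minGen_le {I : Ideal (R K n)} :
    ∀ a : Fin n →₀ ℕ, mon K a ∈ I → ∃ m ∈ minGens I, m ≤ a := by
  classical
  suffices H : ∀ (d : ℕ) (a : Fin n →₀ ℕ), (∑ i, a i) ≤ d → mon K a ∈ I →
      ∃ m ∈ minGens I, m ≤ a by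
    intro a ha
    exact H (∑ i, a i) a le_rfl ha
  intro d
  induction d with
  | zero =>
    intro a hd ha
    refine ⟨a, ⟨ha, ?_⟩, le_rfl⟩
    intro b i hab
    exfalso
    have h1 : a i = b i + 1 := by
      rw [hab]
      simp [Finsupp.add_apply, Finsupp.single_apply]
    have h2 : a i ≤ 0 := le_trans (Finset.single_le_sum (f := fun s => a s)
      (fun _ _ => Nat.zero_le _) (Finset.mem_univ i)) hd
    omega
  | succ d ih =>
    intro a hd ha
    by_cases hmin : a ∈ minGens I
    · exact ⟨a, hmin, le_rfl⟩
    · have hmin' : ¬ (mon K a ∈ I ∧ ∀ (b : Fin n →₀ ℕ) (i : Fin n),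
          a = b + Finsupp.single i 1 → mon K b ∉ I) := hmin
      push_neg at hmin'
      obtain ⟨b, i, hab, hbI⟩ := hmin' ha
      have hsum : (∑ s, b s) ≤ d := by
        have he : (∑ s, a s) = (∑ s, b s) + 1 := by
          rw [hab]
          simp only [Finsupp.add_apply]
          rw [Finset.sum_add_distrib, sum_single_one]
        omega
      obtain ⟨m, hm, hmb⟩ := ih b hsum hbI
      refine ⟨m, hm, hmb.trans ?_⟩
      rw [hab]
      exact Finsupp.le_def.2 fun s => Nat.le_add_right _ _

lemma minGens_antichain (I : Ideal (R K n)) : IsAntichain (· ≤ ·) (minGens I) := by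
  classical
  intro m1 h1 m2 h2 hne hle
  have hex : ∃ i, m1 i < m2 i := by
    by_contra hc
    push_neg at hc
    exact hne (le_antisymm hle (Finsupp.le_def.2 hc))
  obtain ⟨i, hi⟩ := hex
  have hble : Finsupp.single i (1:ℕ) ≤ m2 := Finsupp.le_def.2 fun s => by
    rcases eq_or_ne i s with rfl | hne'
    · simp only [Finsupp.single_apply, if_pos rfl, if_true]
      omega
    · simp [Finsupp.single_apply, hne']
  have hdec : m2 = (m2 - Finsupp.single i 1) + Finsupp.single i 1 :=
    (tsub_add_cancel_of_le hble).symm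
  have hnotin : mon K (m2 - Finsupp.single i 1) ∉ I := h2.2 _ i hdec
  apply hnotin
  refine mon_mem_of_le h1.1 (Finsupp.le_def.2 fun s => ?_)
  rw [Finsupp.tsub_apply]
  rcases eq_or_ne i s with rfl | hne'
  · simp only [Finsupp.single_apply, if_pos rfl, if_true]
    omega
  · have h3 := Finsupp.le_def.1 hle s
    simp only [Finsupp.single_apply, if_neg hne']
    omega

lemma minGens_finite (I : Ideal (R K n)) : (minGens I).Finite :=
  (minGens_antichain I).finite_of_partiallyWellOrderedOn (Set.isPWO_of_wellQuasiOrderedLE _)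

lemma claimD {I : Ideal (R K n)} (h : IsWeaklyPolymatroidal I) :
    ∀ (tv : ℕ) (t : Fin n), t.val = tv → ∀ u ∈ minGens I, ∀ v ∈ minGens I,
      (∀ s, s < t → u s = v s) → v t < u t →
      ∃ w ∈ minGens I, (∀ s, s < t → w s = v s) ∧ w t = v t + 1 ∧ ∀ s, t < s → w s ≤ v s := by
  classical
  intro tv
  induction tv using Nat.strong_induction_on with
  | _ tv ihOuter =>
  rintro t rfl u hu v hv hequ hltu
  obtain ⟨j, htj, w0, hw0eq, hw0I⟩ := h.2 u hu v hv t hequ hltu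
  simp only [Equiv.refl_apply] at hw0eq
  have hw0 : ∀ s, w0 s + (Finsupp.single j (1:ℕ)) s = v s + (Finsupp.single t (1:ℕ)) s := by
    intro s
    rw [← Finsupp.add_apply, ← Finsupp.add_apply, hw0eq]
  have htj' : t ≠ j := ne_of_lt htj
  have hw0t : w0 t = v t + 1 := by
    have h1 := hw0 t
    simp only [Finsupp.single_apply, if_neg (Ne.symm htj'), if_pos rfl, if_true] at h1
    omega
  have hw0j : w0 j + 1 = v j := by
    have h1 := hw0 j
    simp only [Finsupp.single_apply, if_pos rfl, if_true, if_neg htj'] at h1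
    omega
  have hw0o : ∀ s, s ≠ t → w0 s ≤ v s := by
    intro s hst
    have h1 := hw0 s
    have h2 : (Finsupp.single t (1:ℕ)) s = 0 := by
      simp [Finsupp.single_apply, Ne.symm hst]
    rw [h2] at h1
    omega
  have hw0lt : ∀ s, s < t → w0 s = v s := by
    intro s hst
    have h1 := hw0 s
    have h2 : (Finsupp.single t (1:ℕ)) s = 0 := by
      simp [Finsupp.single_apply, ne_of_gt hst]
    have h3 : (Finsupp.single j (1:ℕ)) s = 0 := by
      simp [Finsupp.single_apply, ne_of_gt (hst.trans htj)]
    rw [h2, h3] at h1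
    omega
  set D := ∑ s, v s with hD
  have hbound : ∀ s, v s ≤ D := fun s => Finset.single_le_sum (f := fun s => v s)
    (fun _ _ => Nat.zero_le _) (Finset.mem_univ s)
  have inner : ∀ (k : ℕ) (m : Fin n →₀ ℕ), m ∈ minGens I → m ≤ w0 →
      (∀ s0 : Fin n, s0 < t → m s0 < v s0 → (∀ s, s < s0 → ¬ m s < v s) →
        (t.val - s0.val) * (D + 1) + (v s0 - m s0) ≤ k) →
      ∃ w ∈ minGens I, (∀ s, s < t → w s = v s) ∧ w t = v t + 1 ∧ ∀ s, t < s → w s ≤ v s := by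
    intro k
    induction k using Nat.strong_induction_on with
    | _ k ihInner =>
    intro m hm hmle hk
    have hmlev : ∀ s, s ≠ t → m s ≤ v s := fun s hs => (Finsupp.le_def.1 hmle s).trans (hw0o s hs)
    by_cases hdrop : ∃ s0 : Fin n, s0 < t ∧ m s0 < v s0
    · -- there is a drop below t; take the least one and use the outer IH
      set dropSet := Finset.univ.filter (fun s : Fin n => s < t ∧ m s < v s) with hds
      have hne : dropSet.Nonempty := by
        obtain ⟨s0, h1, h2⟩ := hdrop
        exact ⟨s0, by simp [hds, h1, h2]⟩
      obtain ⟨s0, hs0mem, hs0min⟩ : ∃ s0 ∈ dropSet, ∀ s ∈ dropSet, s0 ≤ s :=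
        ⟨dropSet.min' hne, dropSet.min'_mem hne, fun s hs => Finset.min'_le _ _ hs⟩
      simp only [hds, Finset.mem_filter, Finset.mem_univ, true_and] at hs0mem
      obtain ⟨hs0t, hs0lt⟩ := hs0mem
      have hleast : ∀ s, s < s0 → ¬ m s < v s := by
        intro s hs hcon
        have hle' : s0 ≤ s := hs0min s (by
          simp only [hds, Finset.mem_filter, Finset.mem_univ, true_and]
          exact ⟨hs.trans hs0t, hcon⟩)
        exact absurd hs (not_lt.2 hle')
      have heqbelow : ∀ s, s < s0 → v s = m s := by
        intro s hs
        have h1 := hmlev s (ne_of_lt (hs.trans hs0t))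
        have h2 := hleast s hs
        omega
      have hs0tv : s0.val < t.val := hs0t
      obtain ⟨m', hm'G, hm'eq, hm'c, hm'gt⟩ :=
        ihOuter s0.val hs0tv s0 rfl v hv m hm heqbelow hs0lt
      have hm'le : m' ≤ w0 := Finsupp.le_def.2 fun s => by
        rcases lt_trichotomy s s0 with hlt | heq2 | hgt
        · rw [hm'eq s hlt]; exact Finsupp.le_def.1 hmle s
        · rw [heq2, hm'c]
          have h1 : w0 s0 = v s0 := hw0lt s0 hs0t
          omega
        · exact (hm'gt s hgt).trans (Finsupp.le_def.1 hmle s)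
      have hbnd := hk s0 hs0t hs0lt hleast
      have hDP : (D + 1) ≤ (t.val - s0.val) * (D + 1) :=
        Nat.le_mul_of_pos_left _ (by omega)
      have hk1 : ∀ s0' : Fin n, s0' < t → m' s0' < v s0' → (∀ s, s < s0' → ¬ m' s < v s) →
          (t.val - s0'.val) * (D + 1) + (v s0' - m' s0') ≤ k - 1 := by
        intro s0' h1 h2 h3
        have hge : s0 ≤ s0' := by
          by_contra hc
          push_neg at hc
          have heq' : m' s0' = m s0' := hm'eq s0' hc
          have hnl := hleast s0' hc
          omega
        rcases eq_or_lt_of_le hge with rfl | hgt'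
        · rw [hm'c] at h2 ⊢
          omega
        · have hvl : s0.val < s0'.val := hgt'
          have hsub : t.val - s0'.val ≤ t.val - s0.val - 1 := by omega
          have h4 : (t.val - s0'.val) * (D+1) ≤ (t.val - s0.val - 1) * (D+1) :=
            Nat.mul_le_mul_right _ hsub
          have h5 : (t.val - s0.val - 1) * (D+1) = (t.val - s0.val) * (D+1) - (D+1) := by
            rw [Nat.sub_mul, one_mul]
          have h6 : v s0' - m' s0' ≤ D := le_trans (Nat.sub_le _ _) (hbound s0')
          omega
      have hklt : k - 1 < k := by omega
      exact ihInner (k-1) hklt m' hm'G hm'le hk1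
    · -- no drop below t : m itself is the desired generator
      push_neg at hdrop
      have heq : ∀ s, s < t → m s = v s := by
        intro s hs
        have h1 := hdrop s hs
        have h2 := hmlev s (ne_of_lt hs)
        omega
      have hmt : m t = v t + 1 := by
        have h1 : m t ≤ w0 t := Finsupp.le_def.1 hmle t
        rw [hw0t] at h1
        rcases Nat.lt_or_ge (m t) (v t + 1) with h2 | h2
        · exfalso
          have hmv : m ≤ v := Finsupp.le_def.2 fun s => by
            rcases lt_trichotomy s t with hlt | rfl | hgt
            · rw [heq s hlt]
            · omega
            · exact hmlev s (ne_of_gt hgt)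
          have hmj : m j < v j := by
            have h3 := Finsupp.le_def.1 hmle j
            omega
          have hne2 : m ≠ v := fun hc => by rw [hc] at hmj; omega
          exact (minGens_antichain I) hm hv hne2 hmv
        · omega
      exact ⟨m, hm, heq, hmt, fun s hs => hmlev s (ne_of_gt hs)⟩
  obtain ⟨m0, hm0, hm0le⟩ := exists_minGen_le w0 hw0I
  apply inner (t.val * (D+1) + D) m0 hm0 hm0le
  intro s0 h1 h2 _
  have h4 : (t.val - s0.val) * (D+1) ≤ t.val * (D+1) := Nat.mul_le_mul_right _ (Nat.sub_le _ _)
  have h5 : v s0 - m0 s0 ≤ D := le_trans (Nat.sub_le _ _) (hbound s0)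
  omega

theorem stmt2' {K : Type} [Field K] {n : ℕ} (I : Ideal (R K n))
    (h : IsWeaklyPolymatroidal I) : HasLinearQuotients I := by
  classical
  refine ⟨h.1, ?_⟩
  have hfin := minGens_finite I
  set F := hfin.toFinset with hF
  let rr : (Fin n →₀ ℕ) → (Fin n →₀ ℕ) → Prop := fun a b => toLex b ≤ toLex a
  haveI hdec : DecidableRel rr := fun a b => inferInstanceAs (Decidable (toLex b ≤ toLex a))
  haveI : IsTrans _ rr := ⟨fun a b c h1 h2 => le_trans h2 h1⟩
  haveI : IsAntisymm _ rr := ⟨fun a b h1 h2 => toLex_inj.1 (le_antisymm h2 h1)⟩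
  haveI : IsTotal _ rr := ⟨fun a b => (le_total (toLex b) (toLex a)).elim Or.inl Or.inr⟩
  set L := F.sort rr with hLdef
  have hnd : L.Nodup := Finset.sort_nodup F rr
  have hmemL : ∀ a, a ∈ L ↔ a ∈ minGens I := fun a =>
    (Finset.mem_sort rr).trans (Set.Finite.mem_toFinset hfin)
  have hsorted : ∀ (i j : Fin L.length), i < j → toLex (L.get j) < toLex (L.get i) := by
    intro i j hij
    have h1 : rr (L.get i) (L.get j) :=
      List.pairwise_iff_get.1 (Finset.pairwise_sort F rr) i j hij
    refine lt_of_le_of_ne h1 fun hc => ?_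
    have h2 : L.get j = L.get i := toLex_inj.1 hc
    exact ne_of_lt hij ((hnd.get_inj_iff).1 h2).symm
  refine ⟨L, hnd, Set.ext fun a => ⟨fun ha => (hmemL a).1 ha, fun ha => (hmemL a).2 ha⟩, ?_⟩
  intro q hq hq0
  set u := L.get ⟨q, hq⟩ with hu
  have huG : u ∈ minGens I := (hmemL u).1 (by rw [hu]; exact List.get_mem L _)
  have htake : ∀ a, a ∈ L.take q ↔ (a ∈ minGens I ∧ toLex u < toLex a) := by
    intro a
    constructor
    · intro ha
      obtain ⟨i, hi⟩ := List.mem_iff_get.1 ha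
      have hlen : (L.take q).length = min q L.length := List.length_take
      have hiq : i.val < q := lt_of_lt_of_le i.isLt (le_trans hlen.le (min_le_left _ _))
      have hiL : i.val < L.length := lt_of_lt_of_le i.isLt (le_trans hlen.le (min_le_right _ _))
      have hget : L.get ⟨i.val, hiL⟩ = a := by
        rw [← hi, List.get_eq_getElem, List.get_eq_getElem, List.getElem_take]
      constructor
      · exact (hmemL a).1 (by rw [← hget]; exact List.get_mem L _)
      · rw [← hget, hu]
        exact hsorted ⟨i.val, hiL⟩ ⟨q, hq⟩ hiq
    · rintro ⟨haG, halex⟩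
      obtain ⟨i, hi⟩ := List.mem_iff_get.1 ((hmemL a).2 haG)
      have hiq : i.val < q := by
        rcases lt_trichotomy i.val q with h1 | h1 | h1
        · exact h1
        · exfalso
          have h2 : L.get i = u := by rw [hu]; congr 1; exact Fin.ext h1
          rw [h2] at hi
          rw [← hi] at halex
          exact lt_irrefl _ halex
        · exfalso
          have hlt := hsorted ⟨q, hq⟩ i h1
          rw [hi] at hlt
          exact absurd halex (not_lt.2 hlt.le)
      have hlt2 : i.val < (L.take q).length := by
        rw [List.length_take]
        exact lt_min hiq i.isLt
      have hgetEq : (L.take q)[i.val]'hlt2 = a := by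
        rw [List.getElem_take, ← List.get_eq_getElem]
        exact hi
      rw [← hgetEq]
      exact List.getElem_mem _
  set J := Ideal.span ((mon K) '' {a | a ∈ L.take q}) with hJ
  refine ⟨{i : Fin n | mon K (u + Finsupp.single i 1) ∈ J}, ?_⟩
  apply le_antisymm
  · intro r' hr'
    have hru : r' * mon K u ∈ J := by
      have h1 := Submodule.mem_colon.1 hr' (mon K u) (Ideal.subset_span rfl)
      simpa [smul_eq_mul] using h1
    have hmain : ∀ b ∈ r'.support, (monomial b (MvPolynomial.coeff b r') : R K n) ∈
        Ideal.span ((fun i => (X i : R K n)) ''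
          {i : Fin n | mon K (u + Finsupp.single i 1) ∈ J}) := by
      intro b hb
      have hsup : (b + u) ∈ (r' * mon K u).support := by
        rw [MvPolynomial.mem_support_iff]
        have h2 : MvPolynomial.coeff (b + u) (r' * mon K u) = MvPolynomial.coeff b r' * 1 := by
          rw [mon]
          exact MvPolynomial.coeff_mul_monomial _ _ _ _
        rw [h2, mul_one]
        exact MvPolynomial.mem_support_iff.1 hb
      obtain ⟨g, hgT, hgle⟩ := mem_span_mon_support hru _ hsup
      obtain ⟨hgG, hglex⟩ := (htake g).1 hgT
      obtain ⟨t, hteq, htlt⟩ := Finsupp.Lex.lt_iff.1 hglex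
      simp only [ofLex_toLex] at hteq htlt
      have hbt : 0 < b t := by
        have h2 := Finsupp.le_def.1 hgle t
        simp only [Finsupp.add_apply] at h2
        omega
      obtain ⟨w, hwG, hweq, hwt, hwle⟩ :=
        claimD h t.val t rfl g hgG u huG (fun s hs => (hteq s hs).symm) htlt
      have hwlex : toLex u < toLex w := Finsupp.Lex.lt_iff.2 ⟨t, by
        simp only [ofLex_toLex]
        exact ⟨fun s hs => (hweq s hs).symm, by omega⟩⟩
      have hwJ : mon K w ∈ J := Ideal.subset_span ⟨w, (htake w).2 ⟨hwG, hwlex⟩, rfl⟩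
      have hwle' : w ≤ u + Finsupp.single t 1 := Finsupp.le_def.2 fun s => by
        simp only [Finsupp.add_apply, Finsupp.single_apply]
        rcases lt_trichotomy s t with h1 | h1 | h1
        · rw [if_neg (ne_of_gt h1)]
          have h2 := hweq s h1
          omega
        · subst h1
          rw [if_pos rfl]
          omega
        · rw [if_neg (ne_of_lt h1)]
          have h2 := hwle s h1
          omega
      have htS : mon K (u + Finsupp.single t 1) ∈ J := mon_mem_of_le hwJ hwle'
      have hble : Finsupp.single t (1:ℕ) ≤ b := Finsupp.le_def.2 fun s => by
        rcases eq_or_ne t s with rfl | hne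
        · simp only [Finsupp.single_apply, if_pos rfl, if_true]
          omega
        · simp [Finsupp.single_apply, hne]
      have hX : (X t : R K n) = mon K (Finsupp.single t 1) := rfl
      have hdecomp : (monomial b (MvPolynomial.coeff b r') : R K n)
          = monomial (b - Finsupp.single t 1) (MvPolynomial.coeff b r') * X t := by
        rw [hX, mon, monomial_mul, mul_one, tsub_add_cancel_of_le hble]
      rw [hdecomp]
      exact Ideal.mul_mem_left _ _ (Ideal.subset_span ⟨t, htS, rfl⟩)
    rw [← MvPolynomial.support_sum_monomial_coeff r']
    exact Ideal.sum_mem _ hmain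
  · rw [Ideal.span_le]
    rintro x ⟨i, hiS, rfl⟩
    simp only [SetLike.mem_coe]
    rw [Submodule.mem_colon]
    intro p hp
    obtain ⟨c, hc⟩ := Ideal.mem_span_singleton'.1 hp
    rw [← hc, smul_eq_mul]
    have h2 : (X i : R K n) * (c * mon K u) = c * ((X i) * mon K u) := by ring
    rw [h2]
    have h3 : (X i : R K n) * mon K u = mon K (u + Finsupp.single i 1) := by
      have hX : (X i : R K n) = mon K (Finsupp.single i 1) := rfl
      rw [hX, mon_mul, add_comm]
    rw [h3]
    exact Ideal.mul_mem_left _ _ hiS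

end Aux

/-- Every weakly polymatroidal monomial ideal has linear quotients. -/
theorem stmt2 {K : Type} [Field K] {n : ℕ} (I : Ideal (R K n))
    (h : IsWeaklyPolymatroidal I) : HasLinearQuotients I := stmt2' I h

end Paper
end

section
/- If a squarefree monomial ideal I is weakly polymatroidal, then I is vertex splittable. -/
open MvPolynomial

namespace Paper

variable {K : Type} [Field K] {n : ℕ}

variable {n : ℕ}

variable {K : Type} [Field K] {n : ℕ}

-- ===== aux development =====

section Aux
variable {K : Type} [Field K] {n : ℕ}

lemma mon_mem_span_iff (S : Set (Fin n →₀ ℕ)) (a : Fin n →₀ ℕ) :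
    mon K a ∈ Ideal.span ((mon K) '' S) ↔ ∃ s ∈ S, s ≤ a := by
  have : (mon K) '' S = (fun s => monomial s (1 : K)) '' S := rfl
  rw [this, mem_ideal_span_monomial_image]
  constructor
  · intro h
    exact h a (by simp [mon, support_monomial])
  · intro h xi hxi
    simp [mon, support_monomial] at hxi
    subst hxi; exact h
lemma fle (a b : Fin n →₀ ℕ) : a ≤ b ↔ ∀ i, a i ≤ b i := Finsupp.le_def

lemma flt {a b : Fin n →₀ ℕ} (h : b < a) : b ≤ a ∧ ∃ i, b i < a i := by
  refine ⟨h.le, ?_⟩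
  by_contra hc
  push_neg at hc
  exact h.ne (le_antisymm h.le (Finsupp.le_def.2 hc)) |>.elim
  
lemma sub_add_single {a : Fin n →₀ ℕ} {i : Fin n} (h : 0 < a i) :
    (a - Finsupp.single i 1) + Finsupp.single i 1 = a := by
  ext j
  simp only [Finsupp.add_apply, Finsupp.coe_tsub, Pi.sub_apply, Finsupp.single_apply]
  rcases eq_or_ne i j with hj | hj
  · subst hj; simp only [if_pos trivial]; omega
  · simp [hj]

lemma mem_minGens_iff (S : Set (Fin n →₀ ℕ)) (a : Fin n →₀ ℕ) :
    a ∈ minGens (Ideal.span ((mon K) '' S)) ↔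
      (∃ s ∈ S, s ≤ a) ∧ ∀ b, b < a → ¬ ∃ s ∈ S, s ≤ b := by
  unfold minGens
  simp only [Set.mem_setOf_eq, mon_mem_span_iff]
  constructor
  · rintro ⟨h1, h2⟩
    refine ⟨h1, fun b hb ⟨s, hs, hsb⟩ => ?_⟩
    obtain ⟨hle, i, hi⟩ := flt hb
    have hpos : 0 < a i := lt_of_le_of_lt (Nat.zero_le _) hi
    refine h2 (a - Finsupp.single i 1) i (sub_add_single hpos).symm ⟨s, hs, ?_⟩
    refine Finsupp.le_def.2 fun j => ?_
    have h1 := Finsupp.le_def.1 hsb j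
    have h2 := Finsupp.le_def.1 hle j
    have h3 := Finsupp.le_def.1 hsb i
    simp only [Finsupp.coe_tsub, Pi.sub_apply, Finsupp.single_apply]
    rcases eq_or_ne i j with hj | hj
    · subst hj; simp only [if_pos trivial]; omega
    · simp [hj]; omega
  · rintro ⟨h1, h2⟩
    refine ⟨h1, fun b i hab hb => h2 b ?_ hb⟩
    subst hab
    refine lt_of_le_of_ne le_self_add fun he => ?_
    have := congrArg (fun f => f i) he
    simp [Finsupp.single_apply] at this

lemma sum_lt_of_lt {a b : Fin n →₀ ℕ} (h : b < a) : (∑ i, b i) < ∑ i, a i := by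
  obtain ⟨hle, i, hi⟩ := flt h
  exact Finset.sum_lt_sum (fun j _ => Finsupp.le_def.1 hle j) ⟨i, Finset.mem_univ i, hi⟩

lemma exists_minGen (S : Set (Fin n →₀ ℕ)) :
    ∀ (N : ℕ) (a : Fin n →₀ ℕ), (∑ i, a i) ≤ N → (∃ s ∈ S, s ≤ a) →
      ∃ m ∈ minGens (Ideal.span ((mon K) '' S)), m ≤ a := by
  intro N
  induction N with
  | zero =>
    intro a ha hs
    refine ⟨a, (mem_minGens_iff S a).2 ⟨hs, fun b hb _ => ?_⟩, le_refl a⟩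
    have := sum_lt_of_lt hb
    omega
  | succ N ih =>
    intro a ha hs
    by_cases hmin : ∀ b, b < a → ¬ ∃ s ∈ S, s ≤ b
    · exact ⟨a, (mem_minGens_iff S a).2 ⟨hs, hmin⟩, le_refl a⟩
    · push_neg at hmin
      obtain ⟨b, hb, hsb⟩ := hmin
      have hlt := sum_lt_of_lt hb
      obtain ⟨m, hm, hmb⟩ := ih b (by omega) hsb
      exact ⟨m, hm, le_trans hmb hb.le⟩

lemma span_minGens (S : Set (Fin n →₀ ℕ)) :
    Ideal.span ((mon K) '' S)
      = Ideal.span ((mon K) '' minGens (Ideal.span ((mon K) '' S))) := by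
  apply le_antisymm
  · rw [Ideal.span_le]
    rintro _ ⟨s, hs, rfl⟩
    obtain ⟨m, hm, hma⟩ := exists_minGen (K := K) S (∑ i, s i) s le_rfl ⟨s, hs, le_refl s⟩
    exact (mon_mem_span_iff (minGens (Ideal.span ((mon K) '' S))) s).2 ⟨m, hm, hma⟩
  · rw [Ideal.span_le]
    rintro _ ⟨m, hm, rfl⟩
    exact ((mem_minGens_iff S m).1 hm).1.elim fun s hs =>
      (mon_mem_span_iff S m).2 ⟨s, hs.1, hs.2⟩

/-- minimal generators of the span of an antichain. -/
lemma minGens_antichain_s6 (S : Set (Fin n →₀ ℕ))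
    (hS : ∀ s ∈ S, ∀ s' ∈ S, s ≤ s' → s = s') :
    minGens (Ideal.span ((mon K) '' S)) = S := by
  ext a
  rw [mem_minGens_iff]
  constructor
  · rintro ⟨⟨s, hs, hsa⟩, hmin⟩
    rcases eq_or_lt_of_le hsa with h | h
    · exact h ▸ hs
    · exact absurd ⟨s, hs, le_refl s⟩ (hmin s h)
  · intro ha
    refine ⟨⟨a, ha, le_refl a⟩, fun b hb ⟨s, hs, hsb⟩ => ?_⟩
    have heq : s = a := hS s hs a ha (le_trans hsb hb.le)
    rw [heq] at hsb
    exact absurd (lt_of_le_of_lt hsb hb) (lt_irrefl a)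


lemma mon_single_eq_X (t : Fin n) : mon K (Finsupp.single t 1) = (X t : R K n) := rfl

lemma span_X_mul (t : Fin n) (T : Set (Fin n →₀ ℕ)) :
    Ideal.span {(X t : R K n)} * Ideal.span ((mon K) '' T)
      = Ideal.span ((mon K) '' ((fun b => Finsupp.single t 1 + b) '' T)) := by
  rw [Ideal.span_mul_span', Set.singleton_mul]
  congr 1
  simp only [Set.image_image]
  apply Set.image_congr
  intro b _
  simp [mon, ← mon_single_eq_X, monomial_mul]

lemma span_add_span (A B : Set (Fin n →₀ ℕ)) :
    Ideal.span ((mon K) '' A) + Ideal.span ((mon K) '' B)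
      = Ideal.span ((mon K) '' (A ∪ B)) := by
  rw [Set.image_union, Ideal.span_union, Submodule.add_eq_sup]

lemma ideal_eq_span_minGens {I : Ideal (R K n)} (hI : IsMonomialIdeal I) :
    I = Ideal.span ((mon K) '' minGens I) := by
  obtain ⟨S, rfl⟩ := hI
  exact span_minGens S

lemma mon_mem_iff {I : Ideal (R K n)} (hI : IsMonomialIdeal I) (a : Fin n →₀ ℕ) :
    mon K a ∈ I ↔ ∃ m ∈ minGens I, m ≤ a := by
  conv_lhs => rw [ideal_eq_span_minGens hI]
  exact mon_mem_span_iff _ a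

lemma minGens_lt {I : Ideal (R K n)} (hI : IsMonomialIdeal I) {a : Fin n →₀ ℕ}
    (ha : a ∈ minGens I) {b : Fin n →₀ ℕ} (hb : b < a) : mon K b ∉ I := by
  obtain ⟨S, rfl⟩ := hI
  rw [mon_mem_span_iff]
  exact ((mem_minGens_iff S a).1 ha).2 b hb

lemma minGens_antichain' {I : Ideal (R K n)} (hI : IsMonomialIdeal I)
    {a b : Fin n →₀ ℕ} (ha : a ∈ minGens I) (hb : b ∈ minGens I) (hab : a ≤ b) : a = b := by
  rcases eq_or_lt_of_le hab with h | h
  · exact h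
  · exact absurd ha.1 (minGens_lt hI hb h)


open scoped Classical in
noncomputable def used (I : Ideal (R K n)) : Finset (Fin n) :=
  Finset.univ.filter fun i => ∃ a ∈ minGens I, a i ≠ 0

lemma mem_used {I : Ideal (R K n)} {i : Fin n} :
    i ∈ used I ↔ ∃ a ∈ minGens I, a i ≠ 0 := by
  classical simp [used]

lemma coord_eq {w v : Fin n →₀ ℕ} {j t : Fin n}
    (hw : w + Finsupp.single j 1 = v + Finsupp.single t 1) (i : Fin n) :
    w i + (if j = i then 1 else 0) = v i + (if t = i then 1 else 0) := by
  have := DFunLike.congr_fun hw i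
  simpa [Finsupp.single_apply] using this

lemma mon_zero : mon K (0 : Fin n →₀ ℕ) = 1 := by
  simp [mon]

lemma base_case (I : Ideal (R K n)) (hmono : IsMonomialIdeal I)
    (hused : used I = ∅) : VertexSplittable I := by
  have hzero : ∀ a ∈ minGens I, a = 0 := by
    intro a ha
    ext i
    by_contra hi
    have : i ∈ used I := mem_used.2 ⟨a, ha, hi⟩
    simp [hused] at this
  by_cases hone : (1 : R K n) ∈ I
  · have : I = ⊤ := (Ideal.eq_top_iff_one I).mpr hone
    rw [this]; exact VertexSplittable.top
  · have hG : minGens I = ∅ := by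
      ext a
      simp only [Set.mem_empty_iff_false, iff_false]
      intro ha
      have h0 : a = 0 := hzero a ha
      exact hone (by rw [← mon_zero, ← h0]; exact ha.1)
    have : I = ⊥ := by
      rw [ideal_eq_span_minGens hmono, hG]
      simp
    rw [this]; exact VertexSplittable.bot

section Step
variable (K)

def SG1 (I : Ideal (R K n)) (t : Fin n) : Set (Fin n →₀ ℕ) :=
  {b | b t = 0 ∧ b + Finsupp.single t 1 ∈ minGens I}

def SG2 (I : Ideal (R K n)) (t : Fin n) : Set (Fin n →₀ ℕ) :=
  {a | a ∈ minGens I ∧ a t = 0}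

variable {K}
variable {I : Ideal (R K n)} {t : Fin n}
variable (hmono : IsMonomialIdeal I) (hsq : ∀ a ∈ minGens I, IsSqfree a)

include hsq in
lemma image_SG1 :
    (fun b => Finsupp.single t 1 + b) '' SG1 K I t
      = {a | a ∈ minGens I ∧ a t ≠ 0} := by
  ext a
  constructor
  · rintro ⟨b, ⟨hbt, hbG⟩, rfl⟩
    dsimp only
    rw [add_comm]
    refine ⟨hbG, ?_⟩
    simp [Finsupp.single_apply]
  · rintro ⟨haG, hat⟩
    have h1 : a t = 1 := le_antisymm (hsq a haG t) (Nat.one_le_iff_ne_zero.2 hat)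
    refine ⟨a - Finsupp.single t 1, ⟨?_, ?_⟩, ?_⟩
    · simp [Finsupp.single_apply, h1]
    · rw [sub_add_single (by omega)]; exact haG
    · dsimp only
      rw [add_comm, sub_add_single (by omega)]

include hmono in
lemma antichain_SG1 : ∀ s ∈ SG1 K I t, ∀ s' ∈ SG1 K I t, s ≤ s' → s = s' := by
  rintro b ⟨_, hb⟩ b' ⟨_, hb'⟩ hle
  have : b + Finsupp.single t 1 = b' + Finsupp.single t 1 :=
    minGens_antichain' hmono hb hb' (add_le_add hle le_rfl)
  exact add_right_cancel this

include hmono in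
lemma antichain_SG2 : ∀ s ∈ SG2 K I t, ∀ s' ∈ SG2 K I t, s ≤ s' → s = s' :=
  fun s hs s' hs' hle => minGens_antichain' hmono hs.1 hs'.1 hle

include hmono in
lemma minGens_SI1 :
    minGens (Ideal.span ((mon K) '' SG1 K I t)) = SG1 K I t :=
  minGens_antichain_s6 _ (antichain_SG1 hmono)

include hmono in
lemma minGens_SI2 :
    minGens (Ideal.span ((mon K) '' SG2 K I t)) = SG2 K I t :=
  minGens_antichain_s6 _ (antichain_SG2 hmono)

include hmono hsq in
lemma ideal_decomp :
    Ideal.span {(X t : R K n)} * Ideal.span ((mon K) '' SG1 K I t)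
      + Ideal.span ((mon K) '' SG2 K I t) = I := by
  rw [span_X_mul, span_add_span, image_SG1 hsq]
  conv_rhs => rw [ideal_eq_span_minGens hmono]
  have hset : ({a | a ∈ minGens I ∧ a t ≠ 0} ∪ SG2 K I t) = minGens I := by
    ext a
    simp only [Set.mem_union, Set.mem_setOf_eq, SG2]
    constructor
    · rintro (⟨h, _⟩ | ⟨h, _⟩) <;> exact h
    · intro h
      by_cases hat : a t = 0
      · exact Or.inr ⟨h, hat⟩
      · exact Or.inl ⟨h, hat⟩
  rw [hset]

include hmono hsq in
lemma SI2_le_SI1 (hWP : IsWeaklyPolymatroidal I)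
    (hu0 : ∃ u ∈ minGens I, u t ≠ 0)
    (tmin : ∀ a ∈ minGens I, ∀ s, s < t → a s = 0) :
    Ideal.span ((mon K) '' SG2 K I t) ≤ Ideal.span ((mon K) '' SG1 K I t) := by
  rw [Ideal.span_le]
  rintro _ ⟨v, ⟨hvG, hvt⟩, rfl⟩
  obtain ⟨u₀, hu0G, hu0t⟩ := hu0
  obtain ⟨j, htj, w, hw, hwI⟩ := hWP.2 u₀ hu0G v hvG t
      (fun s hs => by
        simp only [Equiv.refl_apply]
        rw [tmin u₀ hu0G s hs, tmin v hvG s hs])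
      (by simp only [Equiv.refl_apply]; omega)
  simp only [Equiv.refl_apply] at hw
  have hne : j ≠ t := (ne_of_lt htj).symm
  have hc := coord_eq hw
  have hwt : w t = v t + 1 := by have := hc t; simpa [hne] using this
  have hwj : w j + 1 = v j := by have := hc j; simpa [hne, ne_of_lt htj] using this
  have hwo : ∀ i, i ≠ t → i ≠ j → w i = v i := by
    intro i h1 h2
    have := hc i
    simpa [Ne.symm h1, Ne.symm h2] using this
  obtain ⟨g, hgG, hgw⟩ := (mon_mem_iff hmono w).1 hwI
  by_cases hgt : g t = 0
  · exfalso
    have hbv : v - Finsupp.single j 1 < v := by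
      refine lt_of_le_of_ne tsub_le_self fun he => ?_
      have := DFunLike.congr_fun he j
      simp only [Finsupp.coe_tsub, Pi.sub_apply, Finsupp.single_apply, eq_self_iff_true, if_true] at this
      omega
    apply minGens_lt hmono hvG hbv
    rw [mon_mem_iff hmono]
    refine ⟨g, hgG, Finsupp.le_def.2 fun i => ?_⟩
    have hgi := Finsupp.le_def.1 hgw i
    simp only [Finsupp.coe_tsub, Pi.sub_apply, Finsupp.single_apply]
    rcases eq_or_ne j i with rfl | hji
    · simp only [eq_self_iff_true, if_true]; omega
    · simp only [if_neg hji]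
      rcases eq_or_ne i t with rfl | hit
      · omega
      · rw [hwo i hit (Ne.symm hji)] at hgi
        omega
  · have hgt1 : g t = 1 := le_antisymm (hsq g hgG t) (by omega)
    refine (mon_mem_span_iff _ v).2 ⟨g - Finsupp.single t 1, ⟨?_, ?_⟩, ?_⟩
    · simp [Finsupp.single_apply, hgt1]
    · rw [sub_add_single (by omega)]; exact hgG
    · refine Finsupp.le_def.2 fun i => ?_
      have hgi := Finsupp.le_def.1 hgw i
      simp only [Finsupp.coe_tsub, Pi.sub_apply, Finsupp.single_apply]
      rcases eq_or_ne t i with rfl | hti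
      · simp only [eq_self_iff_true, if_true]; omega
      · simp only [if_neg hti]
        rcases eq_or_ne i j with rfl | hij
        · omega
        · rw [hwo i (Ne.symm hti) hij] at hgi
          exact hgi

lemma SG_union :
    ({a | a ∈ minGens I ∧ a t ≠ 0} ∪ SG2 K I t) = minGens I := by
  ext a
  simp only [Set.mem_union, Set.mem_setOf_eq, SG2]
  constructor
  · rintro (⟨h, _⟩ | ⟨h, _⟩) <;> exact h
  · intro h
    by_cases hat : a t = 0
    · exact Or.inr ⟨h, hat⟩
    · exact Or.inl ⟨h, hat⟩

include hmono hsq in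
lemma minGens_X_SI1 :
    minGens (Ideal.span {(X t : R K n)} * Ideal.span ((mon K) '' SG1 K I t))
      = {a | a ∈ minGens I ∧ a t ≠ 0} := by
  rw [span_X_mul, image_SG1 hsq]
  exact minGens_antichain_s6 _ (fun s hs s' hs' hle => minGens_antichain' hmono hs.1 hs'.1 hle)

include hmono in
lemma used_SI1_subset :
    used (Ideal.span ((mon K) '' SG1 K I t)) ⊆ (used I).erase t := by
  intro i hi
  rw [mem_used, minGens_SI1 hmono] at hi
  obtain ⟨b, ⟨hbt, hbG⟩, hbi⟩ := hi
  rw [Finset.mem_erase]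
  refine ⟨fun he => hbi (he ▸ hbt), mem_used.2 ⟨b + Finsupp.single t 1, hbG, ?_⟩⟩
  simp only [Finsupp.add_apply]
  omega

include hmono in
lemma used_SI2_subset :
    used (Ideal.span ((mon K) '' SG2 K I t)) ⊆ (used I).erase t := by
  intro i hi
  rw [mem_used, minGens_SI2 hmono] at hi
  obtain ⟨b, ⟨hbG, hbt⟩, hbi⟩ := hi
  rw [Finset.mem_erase]
  exact ⟨fun he => hbi (he ▸ hbt), mem_used.2 ⟨b, hbG, hbi⟩⟩

include hmono in
lemma WP_SI2 (hWP : IsWeaklyPolymatroidal I)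
    (tmin : ∀ a ∈ minGens I, ∀ s, s < t → a s = 0) :
    IsWeaklyPolymatroidal (Ideal.span ((mon K) '' SG2 K I t)) := by
  refine ⟨⟨SG2 K I t, rfl⟩, ?_⟩
  intro u hu v hv t' hagree hlt
  rw [minGens_SI2 hmono] at hu hv
  simp only [Equiv.refl_apply] at hagree hlt ⊢
  obtain ⟨huG, hut⟩ := hu
  obtain ⟨hvG, hvt⟩ := hv
  obtain ⟨j, hj, w, hw, hwI⟩ := hWP.2 u huG v hvG t'
      (by simpa only [Equiv.refl_apply] using hagree)
      (by simpa only [Equiv.refl_apply] using hlt)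
  simp only [Equiv.refl_apply] at hw
  have htt' : t < t' := by
    have h1 : ¬ t' < t := fun hh => by have := tmin u huG t' hh; omega
    have h2 : t ≠ t' := fun hh => by rw [← hh] at hlt; omega
    omega
  have hc := coord_eq hw
  have hwt : w t = 0 := by
    have := hc t
    have h3 : j ≠ t := fun hh => by rw [hh] at hj; omega
    have h4 : t' ≠ t := (ne_of_lt htt').symm
    simp only [if_neg h3, if_neg h4] at this
    omega
  obtain ⟨g, hgG, hgw⟩ := (mon_mem_iff hmono w).1 hwI
  refine ⟨j, hj, w, hw, (mon_mem_span_iff _ w).2 ⟨g, ⟨hgG, ?_⟩, hgw⟩⟩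
  have := Finsupp.le_def.1 hgw t
  omega

include hmono hsq in
lemma WP_SI1 (hWP : IsWeaklyPolymatroidal I)
    (tmin : ∀ a ∈ minGens I, ∀ s, s < t → a s = 0) :
    IsWeaklyPolymatroidal (Ideal.span ((mon K) '' SG1 K I t)) := by
  have hI2le := SI2_le_SI1 (t := t) hmono hsq
  refine ⟨⟨SG1 K I t, rfl⟩, ?_⟩
  intro u' hu v' hv t' hagree hlt
  rw [minGens_SI1 hmono] at hu hv
  simp only [Equiv.refl_apply] at hagree hlt ⊢
  obtain ⟨hut, huG⟩ := hu
  obtain ⟨hvt, hvG⟩ := hv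
  -- t < t'
  have htne : t' ≠ t := fun hh => by rw [hh] at hlt; omega
  have htt' : t < t' := by
    have h1 : ¬ t' < t := fun hh => by
      have := tmin _ huG t' hh
      simp only [Finsupp.add_apply, Finsupp.single_apply, if_neg htne] at this
      omega
    omega
  obtain ⟨j, hj, w, hw, hwI⟩ := hWP.2 _ huG _ hvG t'
      (by
        intro s hs
        simp only [Equiv.refl_apply, Finsupp.add_apply]
        rw [hagree s hs])
      (by
        simp only [Equiv.refl_apply, Finsupp.add_apply, Finsupp.single_apply, if_neg htne]
        omega)
  simp only [Equiv.refl_apply] at hw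
  have hjt : j ≠ t := fun hh => by rw [hh] at hj; omega
  have hc := coord_eq hw
  have hwt : w t = 1 := by
    have := hc t
    simp only [if_neg hjt, if_neg htne, Finsupp.add_apply,
      Finsupp.single_apply, eq_self_iff_true, if_true] at this
    omega
  refine ⟨j, hj, w - Finsupp.single t 1, ?_, ?_⟩
  · ext i
    have := hc i
    simp only [Finsupp.add_apply, Finsupp.coe_tsub, Pi.sub_apply, Finsupp.single_apply] at this ⊢
    rcases eq_or_ne t i with rfl | hti
    · simp only [eq_self_iff_true, if_true, if_neg (Ne.symm hjt), if_neg htne] at this ⊢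
      omega
    · simp only [if_neg hti] at this ⊢
      omega
  · obtain ⟨g, hgG, hgw⟩ := (mon_mem_iff hmono w).1 hwI
    by_cases hgt : g t = 0
    · refine hI2le hWP ⟨_, huG, by simp [Finsupp.single_apply]⟩ tmin ?_
      refine (mon_mem_span_iff _ _).2 ⟨g, ⟨hgG, hgt⟩, Finsupp.le_def.2 fun i => ?_⟩
      have hgi := Finsupp.le_def.1 hgw i
      simp only [Finsupp.coe_tsub, Pi.sub_apply, Finsupp.single_apply]
      rcases eq_or_ne t i with rfl | hti
      · omega
      · simp only [if_neg hti]
        omega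
    · have hgt1 : g t = 1 := le_antisymm (hsq g hgG t) (by omega)
      refine (mon_mem_span_iff _ _).2 ⟨g - Finsupp.single t 1, ⟨?_, ?_⟩, ?_⟩
      · simp [Finsupp.single_apply, hgt1]
      · rw [sub_add_single (by omega)]; exact hgG
      · refine Finsupp.le_def.2 fun i => ?_
        have hgi := Finsupp.le_def.1 hgw i
        simp only [Finsupp.coe_tsub, Pi.sub_apply, Finsupp.single_apply]
        omega

end Step

lemma main_aux (k : ℕ) : ∀ (I : Ideal (R K n)),
    (∀ a ∈ minGens I, IsSqfree a) → IsWeaklyPolymatroidal I →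
    (used I).card ≤ k → VertexSplittable I := by
  induction k with
  | zero =>
    intro I hsq h hcard
    have hused : used I = ∅ := Finset.card_eq_zero.1 (Nat.le_zero.1 hcard)
    exact base_case I h.1 hused
  | succ k ih =>
    intro I hsq h hcard
    by_cases hused : used I = ∅
    · exact base_case I h.1 hused
    · have hmono := h.1
      have hne : (used I).Nonempty := Finset.nonempty_of_ne_empty hused
      set t := (used I).min' hne with htdef
      have ht : t ∈ used I := Finset.min'_mem _ hne
      have tmin : ∀ a ∈ minGens I, ∀ s, s < t → a s = 0 := by
        intro a ha s hs
        by_contra hne'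
        exact absurd (Finset.min'_le _ s (mem_used.2 ⟨a, ha, hne'⟩)) (by omega)
      obtain ⟨u₀, hu0G, hu0t⟩ := mem_used.1 ht
      have hsq1 : ∀ a ∈ minGens (Ideal.span ((mon K) '' SG1 K I t)), IsSqfree a := by
        rw [minGens_SI1 hmono]
        rintro b ⟨hbt, hbG⟩ i
        have := hsq _ hbG i
        simp only [Finsupp.add_apply] at this
        omega
      have hsq2 : ∀ a ∈ minGens (Ideal.span ((mon K) '' SG2 K I t)), IsSqfree a := by
        rw [minGens_SI2 hmono]
        exact fun a ha => hsq a ha.1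
      have hcard1 : (used (Ideal.span ((mon K) '' SG1 K I t))).card ≤ k := by
        have h1 := Finset.card_le_card (used_SI1_subset (t := t) hmono)
        rw [Finset.card_erase_of_mem ht] at h1
        omega
      have hcard2 : (used (Ideal.span ((mon K) '' SG2 K I t))).card ≤ k := by
        have h1 := Finset.card_le_card (used_SI2_subset (t := t) hmono)
        rw [Finset.card_erase_of_mem ht] at h1
        omega
      have vs1 := ih _ hsq1 (WP_SI1 hmono hsq h tmin) hcard1
      have vs2 := ih _ hsq2 (WP_SI2 hmono h tmin) hcard2
      have hsplit := VertexSplittable.split t _ _ vs1 vs2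
        (by rw [minGens_SI1 hmono]; exact fun a ha => ha.1)
        (by rw [minGens_SI2 hmono]; exact fun a ha => ha.2)
        (SI2_le_SI1 hmono hsq h ⟨u₀, hu0G, hu0t⟩ tmin)
        (by
          rw [ideal_decomp hmono hsq, minGens_X_SI1 hmono hsq, minGens_SI2 hmono]
          exact SG_union.symm)
        (by
          rw [minGens_X_SI1 hmono hsq, minGens_SI2 hmono]
          ext a
          simp only [Set.mem_inter_iff, Set.mem_setOf_eq, SG2, Set.mem_empty_iff_false,
            iff_false]
          rintro ⟨⟨_, h1⟩, _, h2⟩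
          exact h1 h2)
      rw [← ideal_decomp hmono hsq]
      exact hsplit

end Aux


/-- A squarefree weakly polymatroidal ideal is vertex splittable. -/
theorem stmt6 {K : Type} [Field K] {n : ℕ} (I : Ideal (R K n))
    (hsq : ∀ a ∈ minGens I, IsSqfree a)
    (h : IsWeaklyPolymatroidal I) : VertexSplittable I :=
  main_aux (used I).card I hsq h le_rfl

end Paper
end
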